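/- Let μ be a probability measure on ℝ with μ((0,∞)) = 1, let g(x) = ∫ (ε/2)·exp(−ε·|x|) dμ(ε), and let M(t) = ∫ exp(t·ε) dμ(ε). Then for every q ∈ ℝ and all s, s′ with q ≤ s ≤ s′, the probability that the mechanism output q + W (where W has density g) lies in [s, s′] equals (1/2)·(M(−(s − q)) − M(−(s′ − q))); symmetrically, for s ≤ s′ ≤ q it equals (1/2)·(M(−(q − s′)) − M(−(q − s))). In particular the CDF of the output of a randomized-parameter Laplace mechanism is expressed in terms of the moment generating function of the distribution of 1/b. -/

import Mathlib

open MeasureTheory Real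


lemma key_integral (ε q c d : ℝ) :
    ∫ x in c..d, (ε / 2) * Real.exp (-(ε * (x - q))) =
      (1 / 2) * (Real.exp (-(ε * (c - q))) - Real.exp (-(ε * (d - q)))) := by
  have h : ∀ x : ℝ, HasDerivAt (fun y => -((1:ℝ)/2) * Real.exp (-(ε * (y - q))))
      ((ε / 2) * Real.exp (-(ε * (x - q)))) x := by
    intro x
    have h1 : HasDerivAt (fun y : ℝ => -(ε * (y - q))) (-ε) x := by
      have := ((hasDerivAt_id x).sub_const q).const_mul ε
      simpa using this.fun_neg
    have := (h1.exp).const_mul (-((1:ℝ)/2))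
    rw [show (ε / 2) * Real.exp (-(ε * (x - q))) =
      -((1:ℝ)/2) * (Real.exp (-(ε * (x - q))) * -ε) by ring]
    exact this
  rw [intervalIntegral.integral_eq_sub_of_hasDerivAt (fun x _ => h x)]
  · ring
  · apply Continuous.intervalIntegrable
    fun_prop

lemma ae_pos (μ : Measure ℝ) [IsProbabilityMeasure μ] (hμ : μ (Set.Ioi 0) = 1) :
    ∀ᵐ ε ∂μ, 0 < ε := by
  have h : μ (Set.Ioi (0:ℝ))ᶜ = 0 := by
    rw [measure_compl measurableSet_Ioi (by simp), hμ]
    simp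
  filter_upwards [measure_eq_zero_iff_ae_notMem.mp h] with ε hε
  simpa using hε

lemma exp_integrable (μ : Measure ℝ) [IsProbabilityMeasure μ] (hμ : μ (Set.Ioi 0) = 1)
    (t : ℝ) (ht : t ≤ 0) : Integrable (fun ε => Real.exp (t * ε)) μ := by
  apply Integrable.mono' (integrable_const 1) (Continuous.aestronglyMeasurable (by continuity))
  filter_upwards [ae_pos μ hμ] with ε hε
  rw [Real.norm_eq_abs, abs_of_pos (Real.exp_pos _)]
  exact Real.exp_le_one_iff.mpr (mul_nonpos_of_nonpos_of_nonneg ht hε.le)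

lemma icc_integral (ε q s s' : ℝ) (hq : q ≤ s) (hss : s ≤ s') :
    ∫ x in Set.Icc s s', (ε / 2) * Real.exp (-(ε * (x - q))) =
      (1 / 2) * (Real.exp (-(ε * (s - q))) - Real.exp (-(ε * (s' - q)))) := by
  rw [MeasureTheory.integral_Icc_eq_integral_Ioc, ← intervalIntegral.integral_of_le hss,
    key_integral]

lemma main_lemma (μ : Measure ℝ) [IsProbabilityMeasure μ] (hμ : μ (Set.Ioi 0) = 1)
    (q s s' : ℝ) (hq : q ≤ s) (hss : s ≤ s') :
    ∫ x in Set.Icc s s', (∫ ε, (ε / 2) * Real.exp (-(ε * |x - q|)) ∂μ) =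
      (1 / 2) * ((∫ ε, Real.exp (-(s - q) * ε) ∂μ) - ∫ ε, Real.exp (-(s' - q) * ε) ∂μ) := by
  have hcont : Continuous (Function.uncurry fun x ε : ℝ => (ε / 2) * Real.exp (-(ε * (x - q)))) := by
    apply Continuous.mul (by fun_prop)
    apply Real.continuous_exp.comp
    fun_prop
  have habs : ∫ x in Set.Icc s s', (∫ ε, (ε / 2) * Real.exp (-(ε * |x - q|)) ∂μ) =
      ∫ x in Set.Icc s s', (∫ ε, (ε / 2) * Real.exp (-(ε * (x - q))) ∂μ) := by
    apply setIntegral_congr_fun measurableSet_Icc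
    intro x hx
    dsimp only
    rw [abs_of_nonneg (by linarith [hx.1] : (0:ℝ) ≤ x - q)]
  rw [habs]
  have hint : Integrable (Function.uncurry fun x ε : ℝ => (ε / 2) * Real.exp (-(ε * (x - q))))
      ((volume.restrict (Set.Icc s s')).prod μ) := by
    rw [integrable_prod_iff' hcont.aestronglyMeasurable]
    constructor
    · apply Filter.Eventually.of_forall
      intro ε
      exact (Continuous.integrableOn_Icc (by fun_prop))
    · apply Integrable.mono' (integrable_const (1/2 : ℝ))
      · exact (hcont.stronglyMeasurable.norm.integral_prod_left').aestronglyMeasurable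
      · filter_upwards [ae_pos μ hμ] with ε hε
        have hnn : ∀ x : ℝ, 0 ≤ (ε / 2) * Real.exp (-(ε * (x - q))) := by
          intro x; positivity
        have heq : ∫ x in Set.Icc s s',
            ‖Function.uncurry (fun x ε : ℝ => (ε / 2) * Real.exp (-(ε * (x - q)))) (x, ε)‖ =
            ∫ x in Set.Icc s s', (ε / 2) * Real.exp (-(ε * (x - q))) := by
          congr 1
          funext x
          simp only [Function.uncurry_apply_pair]
          rw [Real.norm_eq_abs, abs_of_nonneg (hnn x)]
        rw [Real.norm_eq_abs, heq, icc_integral ε q s s' hq hss]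
        have h0 : 0 ≤ ε * (s - q) := mul_nonneg hε.le (by linarith)
        have h1 : Real.exp (-(ε * (s - q))) ≤ 1 := Real.exp_le_one_iff.mpr (by linarith)
        have h2 : 0 < Real.exp (-(ε * (s' - q))) := Real.exp_pos _
        have h3 : Real.exp (-(ε * (s' - q))) ≤ Real.exp (-(ε * (s - q))) :=
          Real.exp_le_exp.mpr (by nlinarith)
        rw [abs_of_nonneg (by linarith)]
        linarith
  rw [MeasureTheory.integral_integral_swap hint]
  have : ∀ ε : ℝ, ∫ x in Set.Icc s s', (ε / 2) * Real.exp (-(ε * (x - q))) =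
      (1 / 2) * (Real.exp (-(s - q) * ε) - Real.exp (-(s' - q) * ε)) := by
    intro ε
    rw [icc_integral ε q s s' hq hss]
    ring_nf
  simp_rw [this]
  rw [MeasureTheory.integral_const_mul, integral_sub (exp_integrable μ hμ _ (by linarith))
    (exp_integrable μ hμ _ (by linarith))]

/-- The CDF of the output of a randomized-parameter Laplace mechanism in terms of the
moment generating function `M` of the distribution `μ` of the reciprocal scale `1/b`:
for `q ≤ s ≤ s′`, `P(q + W ∈ [s, s′]) = (1/2)·(M(−(s−q)) − M(−(s′−q)))`, and symmetrically
for `s ≤ s′ ≤ q`, it equals `(1/2)·(M(−(q−s′)) − M(−(q−s)))`, where `W` has density `g`. -/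
theorem mixture_laplace_cdf_via_mgf
    (μ : Measure ℝ) [IsProbabilityMeasure μ] (hμ : μ (Set.Ioi 0) = 1)
    (g : ℝ → ℝ)
    (hg : ∀ x : ℝ, g x = ∫ ε, (ε / 2) * Real.exp (-(ε * |x|)) ∂μ)
    (M : ℝ → ℝ)
    (hM : ∀ t : ℝ, M t = ∫ ε, Real.exp (t * ε) ∂μ) :
    ∀ q s s' : ℝ,
      (q ≤ s → s ≤ s' →
        ∫ x in Set.Icc s s', g (x - q) = (1 / 2) * (M (-(s - q)) - M (-(s' - q)))) ∧
      (s ≤ s' → s' ≤ q →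
        ∫ x in Set.Icc s s', g (x - q) = (1 / 2) * (M (-(q - s')) - M (-(q - s)))) := by
  intro q s s'
  constructor
  · intro hq hss
    have h1 : ∫ x in Set.Icc s s', g (x - q) =
        ∫ x in Set.Icc s s', (∫ ε, (ε / 2) * Real.exp (-(ε * |x - q|)) ∂μ) := by
      apply setIntegral_congr_fun measurableSet_Icc
      intro x _
      exact hg (x - q)
    rw [h1, main_lemma μ hμ q s s' hq hss, hM, hM]
  · intro hss hsq
    have hsym : ∀ x : ℝ, g (x - q) = g ((2 * q - x) - q) := by
      intro x
      have h2 : (2 * q - x) - q = -(x - q) := by ring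
      rw [h2, hg, hg]
      simp [abs_neg, abs_sub_comm]
    have h1 : ∫ x in Set.Icc s s', g (x - q) =
        ∫ x in Set.Icc s s', g ((2 * q - x) - q) :=
      setIntegral_congr_fun measurableSet_Icc (fun x _ => hsym x)
    have h2 : ∫ x in Set.Icc s s', g ((2 * q - x) - q) =
        ∫ x in Set.Icc (2 * q - s') (2 * q - s), g (x - q) := by
      rw [MeasureTheory.integral_Icc_eq_integral_Ioc, ← intervalIntegral.integral_of_le hss,
        intervalIntegral.integral_comp_sub_left (fun u => g (u - q)) (2 * q),
        intervalIntegral.integral_of_le (by linarith : 2 * q - s' ≤ 2 * q - s),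
        ← MeasureTheory.integral_Icc_eq_integral_Ioc]
    have h3 : ∫ x in Set.Icc (2 * q - s') (2 * q - s), g (x - q) =
        ∫ x in Set.Icc (2 * q - s') (2 * q - s), (∫ ε, (ε / 2) * Real.exp (-(ε * |x - q|)) ∂μ) :=
      setIntegral_congr_fun measurableSet_Icc (fun x _ => hg (x - q))
    rw [h1, h2, h3, main_lemma μ hμ q (2 * q - s') (2 * q - s) (by linarith) (by linarith),
      hM, hM]
    have e1 : -(2 * q - s' - q) = -(q - s') := by ring
    have e2 : -(2 * q - s - q) = -(q - s) := by ring
    rw [e1, e2]
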